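/- Let S = diag[s₁,s₂,s₃] be a real diagonal 3×3 matrix, a = (a₁,a₂,a₃) ∈ ℝ³ a unit vector, and θ ∈ ℝ. Then tr(S · exp(θ â)) = tr(S) − (1 − cos θ)·[(s₁+s₂)a₃² + (s₂+s₃)a₁² + (s₃+s₁)a₂²], where exp denotes the matrix exponential. -/

import Mathlib

open Matrix Real

noncomputable section

/-- The space of real 3×3 matrices. -/
abbrev M3 : Type := Matrix (Fin 3) (Fin 3) ℝ

/-- The hat map: the skew-symmetric matrix `x̂` satisfying `x̂ y = x × y`. -/
def hat (x₁ x₂ x₃ : ℝ) : M3 :=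
  !![0, -x₃, x₂; x₃, 0, -x₁; -x₂, x₁, 0]

lemma hat_cube (a₁ a₂ a₃ : ℝ) (ha : a₁ ^ 2 + a₂ ^ 2 + a₃ ^ 2 = 1) :
    hat a₁ a₂ a₃ * hat a₁ a₂ a₃ * hat a₁ a₂ a₃ = -(hat a₁ a₂ a₃) := by
  ext i j
  fin_cases i <;> fin_cases j <;>
    simp [hat, Matrix.mul_apply, Fin.sum_univ_three]
  · ring
  · linear_combination a₃ * ha
  · linear_combination (-a₂) * ha
  · linear_combination (-a₃) * ha
  · ring
  · linear_combination a₁ * ha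
  · linear_combination a₂ * ha
  · linear_combination (-a₁) * ha
  · ring

lemma hat_pow_odd (A : M3) (hA : A * A * A = -A) (k : ℕ) :
    A ^ (2 * k + 1) = ((-1 : ℝ) ^ k) • A := by
  induction k with
  | zero => simp
  | succ n ih =>
    have h : 2 * (n + 1) + 1 = (2 * n + 1) + 2 := by ring
    rw [h, pow_add, ih, pow_two, smul_mul_assoc, ← mul_assoc, hA]
    rw [pow_succ]
    module

lemma hat_pow_even (A : M3) (hA : A * A * A = -A) (k : ℕ) :
    A ^ (2 * (k + 1)) = ((-1 : ℝ) ^ k) • (A * A) := by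
  induction k with
  | zero => simp [pow_two, mul_assoc]
  | succ n ih =>
    have h : 2 * (n + 1 + 1) = (2 * (n + 1)) + 2 := by ring
    rw [h, pow_add, ih, pow_two, smul_mul_assoc]
    have h2 : A * A * (A * A) = -(A * A) := by
      rw [← mul_assoc, hA]; simp
    rw [h2, pow_succ]
    module

/-- Rodrigues' formula. -/
lemma rodrigues (A : M3) (hA : A * A * A = -A) (θ : ℝ) :
    NormedSpace.exp (θ • A) =
      1 + Real.sin θ • A + (1 - Real.cos θ) • (A * A) := by
  rw [NormedSpace.exp_eq_tsum (𝕂 := ℝ)]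
  refine HasSum.tsum_eq ?_
  set f : ℕ → M3 := fun n => (((n.factorial : ℝ))⁻¹) • (θ • A) ^ n with hf
  have key : ∀ n : ℕ, (θ • A) ^ n = (θ ^ n) • A ^ n := fun n => smul_pow θ A n
  -- odd part
  have hodd : HasSum (fun k : ℕ => f (2 * k + 1)) (Real.sin θ • A) := by
    have hs := (Real.hasSum_sin θ).smul_const A
    refine hs.congr_fun fun k => ?_
    rw [hf]
    simp only
    rw [key, hat_pow_odd A hA, smul_smul, smul_smul]
    congr 1
    ring
  -- even part
  have heven : HasSum (fun k : ℕ => f (2 * k)) (1 + (1 - Real.cos θ) • (A * A)) := by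
    set h : ℕ → M3 := fun n => (((-1 : ℝ) ^ n * θ ^ (2 * n) / ((2 * n).factorial : ℝ))) • (A * A)
      with hh
    have hc : HasSum h (Real.cos θ • (A * A)) := (Real.hasSum_cos θ).smul_const (A * A)
    have hc1 : HasSum (fun n : ℕ => h (n + 1)) (Real.cos θ • (A * A) - (A * A)) := by
      rw [hasSum_nat_add_iff 1]
      have h0 : ∑ i ∈ Finset.range 1, h i = A * A := by simp [hh]
      rw [h0, sub_add_cancel]
      exact hc
    have hc2 : HasSum (fun n : ℕ => f (2 * (n + 1))) ((1 - Real.cos θ) • (A * A)) := by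
      have hn := hc1.neg
      have hsum : -(Real.cos θ • (A * A) - (A * A)) = (1 - Real.cos θ) • (A * A) := by module
      rw [← hsum]
      refine hn.congr_fun fun k => ?_
      rw [hf, hh]
      simp only
      rw [key, hat_pow_even A hA, smul_smul, smul_smul, ← neg_smul]
      congr 1
      ring
    have htail := (hasSum_nat_add_iff (f := fun k : ℕ => f (2 * k)) 1).mp hc2
    convert htail using 1
    · rfl
    have h1 : ∑ i ∈ Finset.range 1, f (2 * i) = 1 := by simp [hf]
    rw [h1]
    module
  have htot := heven.even_add_odd hodd
  convert htot using 1
  · rfl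
  module

/-- Let `S = diag[s₁,s₂,s₃]` be a real diagonal 3×3 matrix,
`a = (a₁,a₂,a₃)` a unit vector in ℝ³, and `θ ∈ ℝ`.  Then
`tr(S·exp(θ â)) = tr(S) − (1−cos θ)·[(s₁+s₂)a₃² + (s₂+s₃)a₁² + (s₃+s₁)a₂²]`,
where `exp` is the matrix exponential. -/
theorem trace_diagonal_mul_exp_hat
    (s₁ s₂ s₃ a₁ a₂ a₃ θ : ℝ) (ha : a₁ ^ 2 + a₂ ^ 2 + a₃ ^ 2 = 1) :
    (Matrix.diagonal ![s₁, s₂, s₃] * NormedSpace.exp (θ • hat a₁ a₂ a₃)).trace =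
      (Matrix.diagonal ![s₁, s₂, s₃]).trace -
        (1 - Real.cos θ) *
          ((s₁ + s₂) * a₃ ^ 2 + (s₂ + s₃) * a₁ ^ 2 + (s₃ + s₁) * a₂ ^ 2) := by
  rw [rodrigues _ (hat_cube a₁ a₂ a₃ ha) θ]
  simp only [Matrix.trace, Matrix.diag, Matrix.mul_apply, Fin.sum_univ_three]
  simp [hat, Matrix.diagonal, Matrix.one_apply, Fin.sum_univ_three]
  ring

end
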